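/- Let u be a signed word with k letters and let N_u be the subword-counting function assigning to a signed word w the number of k-element subsets of the letters of w whose induced signed subword is cyclically equivalent to an isomorphic copy of u. Then for every signed word w and every subset S of its letters, the prolongation of N_u satisfies Ñ_u(w,S) = Σ_{T ⊆ S} (−1)^{|T|} N_u(w∖T) = the number of k-element subsets U of the letters of w with S ⊆ U whose induced signed subword is cyclically equivalent to an isomorphic copy of u; in particular Ñ_u(w,S) = 0 whenever |S| > k. -/
import Mathlib


/-- Letters are indexed by natural numbers; a signed letter carries a sign
(`true` = `+`, `false` = `−`). -/
abbrev Letter : Type := ℕ × Bool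

/-- A signed word: every entry occurs exactly twice, and the two occurrences of
any letter carry the same sign. -/
def IsSignedWord (w : List Letter) : Prop :=
  ∀ p ∈ w, w.count p = 2 ∧ ∀ q ∈ w, q.1 = p.1 → q.2 = p.2

/-- Signed words (concrete representatives; isomorphism is subsumed by cyclic
equivalence below). -/
def SignedWord : Type := {w : List Letter // IsSignedWord w}

/-- The set of letters occurring in a list of signed letters. -/
def lettersL (w : List Letter) : Finset ℕ := (w.map Prod.fst).toFinset

/-- The set of letters of a signed word. -/
def SignedWord.letters (w : SignedWord) : Finset ℕ := lettersL w.1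

/-- The number of (distinct) letters of a signed word. -/
def SignedWord.numLetters (w : SignedWord) : ℕ := w.letters.card

theorem isSignedWord_filter (q : ℕ → Bool) {w : List Letter} (hw : IsSignedWord w) :
    IsSignedWord (w.filter fun p => q p.1) := by
  intro p hp
  rw [List.mem_filter] at hp
  refine ⟨?_, fun r hr => (hw p hp.1).2 r (List.mem_filter.mp hr).1⟩
  rw [List.count_filter (p := fun r : Letter => q r.1) hp.2]
  exact (hw p hp.1).1

/-- Delete both occurrences of every letter of `T` from `w`. -/
def SignedWord.delete (w : SignedWord) (T : Finset ℕ) : SignedWord :=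
  ⟨w.1.filter fun p => decide (p.1 ∉ T), isSignedWord_filter (fun a => decide (a ∉ T)) w.2⟩

/-- The induced signed subword of `w` on a set `U` of letters. -/
def SignedWord.restrict (w : SignedWord) (U : Finset ℕ) : SignedWord :=
  ⟨w.1.filter fun p => decide (p.1 ∈ U), isSignedWord_filter (fun a => decide (a ∈ U)) w.2⟩

/-- Sign-preserving relabeling of letters. -/
def Iso (w w' : List Letter) : Prop :=
  ∃ f : ℕ ≃ ℕ, w' = w.map fun p => (f p.1, p.2)

/-- The basic move `A^ε x A^ε y ↦ x A^(−ε) y A^(−ε)`. -/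
def Move (w w' : List Letter) : Prop :=
  ∃ (a : ℕ) (s : Bool) (x y : List Letter),
    w = (a, s) :: (x ++ (a, s) :: y) ∧ w' = x ++ (a, !s) :: (y ++ [(a, !s)])

/-- Cyclic equivalence of signed words: the equivalence relation generated by
isomorphism together with the basic move. -/
def CyclicEquivL : List Letter → List Letter → Prop :=
  Relation.EqvGen fun w w' => Iso w w' ∨ Move w w'

/-- Cyclic equivalence of signed words. -/
def SignedWord.CyclicEquiv (w w' : SignedWord) : Prop := CyclicEquivL w.1 w'.1

/-- A cyclic equivalence invariant with values in `F`. -/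
def WordInvariant (F : Type*) [Field F] (v : SignedWord → F) : Prop :=
  ∀ w w' : SignedWord, w.CyclicEquiv w' → v w = v w'

/-- The prolongation of `v` to the singular signed word `(w, S)` (the letters of
`S` being declared singular), given by inclusion–exclusion. -/
def prolong (F : Type*) [Field F] (v : SignedWord → F) (w : SignedWord) (S : Finset ℕ) : F :=
  ∑ T ∈ S.powerset, (-1 : F) ^ T.card * v (w.delete T)

/-- `v` is a finite type invariant of degree ≤ `n`: it is a cyclic equivalence
invariant whose prolongation vanishes on every singular signed word with more
than `n` singular letters. -/
def FiniteTypeLe (F : Type*) [Field F] (n : ℕ) (v : SignedWord → F) : Prop :=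
  WordInvariant F v ∧
    ∀ (w : SignedWord) (S : Finset ℕ), S ⊆ w.letters → n < S.card →
      prolong F v w S = 0

/-- The empty signed word `φ`. -/
def wordEmpty : SignedWord := ⟨[], by intro p hp; simp at hp⟩

/-- The one-letter positive signed word `AA`. -/
def wordAA : SignedWord := ⟨[(0, true), (0, true)], by unfold IsSignedWord; decide⟩

/-- The one-letter negative signed word `ĀĀ`. -/
def wordAAneg : SignedWord := ⟨[(0, false), (0, false)], by unfold IsSignedWord; decide⟩

/-- The two-letter signed word `AABB`. -/
def wordAABB : SignedWord := ⟨[(0, true), (0, true), (1, true), (1, true)], by unfold IsSignedWord; decide⟩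

/-- The two-letter signed word `AAB̄B̄`. -/
def wordAABnBn : SignedWord := ⟨[(0, true), (0, true), (1, false), (1, false)], by unfold IsSignedWord; decide⟩

/-- The two-letter signed word `AB̄B̄A`. -/
def wordABnBnA : SignedWord := ⟨[(0, true), (1, false), (1, false), (0, true)], by unfold IsSignedWord; decide⟩

/-- The two-letter signed word `ABAB`. -/
def wordABAB : SignedWord := ⟨[(0, true), (1, true), (0, true), (1, true)], by unfold IsSignedWord; decide⟩

/-- The underlying list of the word `A₁A₁A₂A₂…AₙAₙ` (all letters positive). -/
def wListN (n : ℕ) : List Letter := (List.range n).flatMap fun i => [(i, true), (i, true)]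

/-- `Ncount u w`: the number of `k`-element subsets of the letters of `w`
(`k` = number of letters of `u`) whose induced signed subword is cyclically
equivalent to (an isomorphic copy of) `u`. -/
noncomputable def Ncount (u w : SignedWord) : ℕ := by
  classical
  exact (w.letters.powerset.filter fun U =>
    U.card = u.numLetters ∧ (w.restrict U).CyclicEquiv u).card

theorem prolong_add (F : Type*) [Field F] (v₁ v₂ : SignedWord → F) (w : SignedWord) (S : Finset ℕ) :
    prolong F (v₁ + v₂) w S = prolong F v₁ w S + prolong F v₂ w S := by
  simp [prolong, ← Finset.sum_add_distrib, mul_add]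

theorem prolong_smul (F : Type*) [Field F] (c : F) (v : SignedWord → F) (w : SignedWord) (S : Finset ℕ) :
    prolong F (c • v) w S = c * prolong F v w S := by
  rw [prolong, prolong, Finset.mul_sum]
  exact Finset.sum_congr rfl fun T _ => by simp [mul_left_comm]

/-- The `F`-vector space `Vₙ` of finite type invariants of degree ≤ `n`. -/
def Vn (F : Type*) [Field F] (n : ℕ) : Submodule F (SignedWord → F) where
  carrier := {v | FiniteTypeLe F n v}
  add_mem' := by
    rintro v₁ v₂ ⟨h1, h1'⟩ ⟨h2, h2'⟩
    refine ⟨fun w w' h => by simp [h1 w w' h, h2 w w' h], fun w S hS hc => ?_⟩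
    rw [prolong_add, h1' w S hS hc, h2' w S hS hc, add_zero]
  zero_mem' := ⟨fun _ _ _ => rfl, fun w S hS hc => by simp [prolong]⟩
  smul_mem' := by
    rintro c v ⟨h, h'⟩
    refine ⟨fun w w' hww => by simp [h w w' hww], fun w S hS hc => ?_⟩
    rw [prolong_smul, h' w S hS hc, mul_zero]

/-- Cyclic equivalence as a setoid on signed words. -/
def cycSetoid : Setoid SignedWord :=
  ⟨SignedWord.CyclicEquiv, fun w => Relation.EqvGen.refl w.1,
    fun h => Relation.EqvGen.symm _ _ h, fun h h' => Relation.EqvGen.trans _ _ _ h h'⟩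


theorem letters_delete (w : SignedWord) (T : Finset ℕ) :
    (w.delete T).letters = w.letters \ T := by
  ext a
  simp [SignedWord.letters, lettersL, SignedWord.delete, List.mem_filter, and_comm]

theorem restrict_delete (w : SignedWord) {U T : Finset ℕ} (h : Disjoint U T) :
    (w.delete T).restrict U = w.restrict U := by
  apply Subtype.ext
  show (w.1.filter _).filter _ = _
  rw [List.filter_filter]
  apply List.filter_congr
  intro p _
  by_cases hp : p.1 ∈ U
  · simp [hp, Finset.disjoint_left.mp h hp]
  · simp [hp]

open Finset in
theorem Ncount_delete (u w : SignedWord) (T : Finset ℕ) [DecidablePred fun U : Finset ℕ => (w.restrict U).CyclicEquiv u] :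
    Ncount u (w.delete T) =
      (w.letters.powerset.filter fun U => Disjoint U T ∧ U.card = u.numLetters ∧
        (w.restrict U).CyclicEquiv u).card := by
  classical
  unfold Ncount
  apply Finset.card_bij (fun U _ => U)
  · intro U hU
    simp only [Finset.mem_filter, Finset.mem_powerset, letters_delete, Finset.subset_sdiff] at hU ⊢
    obtain ⟨⟨h1, h2⟩, h3, h4⟩ := hU
    exact ⟨h1, h2, h3, by rwa [restrict_delete w h2] at h4⟩
  · intro U _ V _ h; exact h
  · intro U hU
    simp only [Finset.mem_filter, Finset.mem_powerset, letters_delete, Finset.subset_sdiff] at hU ⊢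
    obtain ⟨h1, h2, h3, h4⟩ := hU
    exact ⟨U, ⟨⟨h1, h2⟩, h3, by rwa [restrict_delete w h2]⟩, rfl⟩

theorem neg_one_pow_sum (F : Type*) [Field F] (s : Finset ℕ) :
    (∑ T ∈ s.powerset, (-1 : F) ^ T.card) = if s = ∅ then 1 else 0 := by
  have hz := Finset.sum_powerset_neg_one_pow_card (x := s)
  calc (∑ T ∈ s.powerset, (-1 : F) ^ T.card)
      = ((∑ T ∈ s.powerset, (-1 : ℤ) ^ T.card : ℤ) : F) := by push_cast; ring_nf
    _ = ((if s = ∅ then (1:ℤ) else 0 : ℤ) : F) := by rw [hz]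
    _ = if s = ∅ then 1 else 0 := by split <;> simp


/-- the prolongation of `N_u` satisfies
`Ñ_u(w,S) = Σ_{T ⊆ S} (−1)^{|T|} N_u(w∖T)` and equals the number of
`k`-element subsets `U` of the letters of `w` with `S ⊆ U` whose induced signed
subword is cyclically equivalent to (a copy of) `u`; in particular it vanishes
when `|S| > k`. -/
theorem prolong_Ncount (F : Type*) [Field F] [CharZero F] (u w : SignedWord)
    (S : Finset ℕ) (hS : S ⊆ w.letters) :
    (prolong F (fun w' => (Ncount u w' : F)) w S =
      ∑ T ∈ S.powerset, (-1 : F) ^ T.card * (Ncount u (w.delete T) : F)) ∧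
    (prolong F (fun w' => (Ncount u w' : F)) w S =
      (Nat.card {U : Finset ℕ // U ⊆ w.letters ∧ S ⊆ U ∧ U.card = u.numLetters ∧
        (w.restrict U).CyclicEquiv u} : F)) ∧
    (u.numLetters < S.card → prolong F (fun w' => (Ncount u w' : F)) w S = 0) := by

  classical
  set k := u.numLetters with hk
  set A := w.letters.powerset.filter fun U => U.card = k ∧ (w.restrict U).CyclicEquiv u with hA
  set B := w.letters.powerset.filter fun U => S ⊆ U ∧ U.card = k ∧ (w.restrict U).CyclicEquiv u
    with hB
  have key : prolong F (fun w' => (Ncount u w' : F)) w S = (B.card : F) := by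
    unfold prolong
    calc ∑ T ∈ S.powerset, (-1 : F) ^ T.card * (Ncount u (w.delete T) : F)
        = ∑ T ∈ S.powerset, ∑ U ∈ A, (-1 : F) ^ T.card * (if Disjoint U T then 1 else 0) := by
          refine Finset.sum_congr rfl fun T _ => ?_
          rw [← Finset.mul_sum, Finset.sum_boole, Ncount_delete]
          have heq : (Finset.filter (fun U => Disjoint U T ∧ U.card = k ∧
              (w.restrict U).CyclicEquiv u) w.letters.powerset) = A.filter fun U => Disjoint U T := by
            rw [hA, Finset.filter_filter]
            ext U
            simp only [Finset.mem_filter]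
            tauto
          rw [show u.numLetters = k from rfl, heq]
      _ = ∑ U ∈ A, ∑ T ∈ S.powerset, (-1 : F) ^ T.card * (if Disjoint U T then 1 else 0) :=
          Finset.sum_comm
      _ = ∑ U ∈ A, ∑ T ∈ (S \ U).powerset, (-1 : F) ^ T.card := by
          refine Finset.sum_congr rfl fun U _ => ?_
          simp only [mul_ite, mul_one, mul_zero]
          rw [← Finset.sum_filter]
          congr 1
          ext T
          simp only [Finset.mem_filter, Finset.mem_powerset, Finset.subset_sdiff]
          rw [disjoint_comm]
      _ = ∑ U ∈ A, if S \ U = ∅ then (1:F) else 0 := by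
          exact Finset.sum_congr rfl fun U _ => neg_one_pow_sum F _
      _ = ∑ U ∈ A, if S ⊆ U then (1:F) else 0 := by
          refine Finset.sum_congr rfl fun U _ => ?_
          simp [Finset.sdiff_eq_empty_iff_subset]
      _ = ((A.filter fun U => S ⊆ U).card : F) := by rw [Finset.sum_boole]
      _ = (B.card : F) := by
          congr 1
          congr 1
          rw [hA, Finset.filter_filter, hB]
          ext U
          simp only [Finset.mem_filter]
          tauto
  refine ⟨rfl, ?_, ?_⟩
  · rw [key]
    congr 1
    have : Nat.card {U : Finset ℕ // U ⊆ w.letters ∧ S ⊆ U ∧ U.card = k ∧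
        (w.restrict U).CyclicEquiv u} = Nat.card {U : Finset ℕ // U ∈ B} := by
      apply Nat.card_congr
      apply Equiv.subtypeEquivRight
      intro U
      simp [hB, Finset.mem_filter, Finset.mem_powerset, and_assoc]
    rw [this, Nat.card_eq_fintype_card, Fintype.card_coe]
  · intro hlt
    rw [key]
    have : B = ∅ := by
      rw [Finset.eq_empty_iff_forall_notMem]
      intro U hU
      simp only [hB, Finset.mem_filter, Finset.mem_powerset] at hU
      have := Finset.card_le_card hU.2.1
      omega
    simp [this]
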